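/- For all integers N ≥ 2 and K ≥ 1, the storage–retrieval tradeoff point (2α₀, 2β₀) = (2K/N, 2·Σ_{i=1}^{K} N^{-i}) is achievable: there exists an (N,K) PIR scheme (for some message entropy L > 0) whose storage cost satisfies α ≤ 2K/N and whose download cost satisfies β ≤ 2·Σ_{i=1}^{K} N^{-i}. (Proposition 1(i), regime-wise 2-approximation, achievability part.) -/

import Mathlib

/- Shannon entropy framework for finitely-valued random variables on a finite
probability space, and the definition of an (N,K) private information retrieval
(PIR) scheme. -/

open scoped Classical
open Finset

/-- `prob p X a` is the probability that the random variable `X` takes the value `a`,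
where `p` is the probability mass function on the finite sample space `Ω`. -/
noncomputable def prob {Ω α : Type} [Fintype Ω] (p : Ω → ℝ) (X : Ω → α) (a : α) : ℝ :=
  ∑ ω : Ω, if X ω = a then p ω else 0

/-- Shannon entropy (natural base) of a random variable `X` on a finite sample space. -/
noncomputable def ent {Ω α : Type} [Fintype Ω] (p : Ω → ℝ) (X : Ω → α) : ℝ :=
  ∑ a ∈ Finset.univ.image X, Real.negMulLog (prob p X a)

/-- Conditional Shannon entropy `H(X | Y) = H(X, Y) - H(Y)`. -/
noncomputable def condEnt {Ω α β : Type} [Fintype Ω] (p : Ω → ℝ) (X : Ω → α) (Y : Ω → β) : ℝ :=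
  ent p (fun ω => (X ω, Y ω)) - ent p Y

/-- An `(N, K)` private information retrieval scheme:
`K` mutually independent messages `W` with entropy `L` each, stored contents `S` at `N`
servers (deterministic functions of the messages), a random key `F` independent of the
messages, queries `Q` (deterministic functions of `F`), answers `A` (deterministic
functions of the query and the stored content, with an answer function not depending on
the desired index), correctness and privacy. Messages/servers are indexed `0, …, K-1`
and `0, …, N-1` (paper index `i` corresponds to index `i - 1` here). -/
structure PIRScheme (N K : ℕ) where
  Ω : Type
  [finΩ : Fintype Ω]
  Msg : Type
  Sto : Type
  Qry : Type
  Ans : Type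
  Key : Type
  p : Ω → ℝ
  p_nonneg : ∀ ω, 0 ≤ p ω
  p_sum : ∑ ω : Ω, p ω = 1
  L : ℝ
  L_pos : 0 < L
  W : Fin K → Ω → Msg
  S : Fin N → Ω → Sto
  F : Ω → Key
  Q : Fin K → Fin N → Ω → Qry
  A : Fin K → Fin N → Ω → Ans
  W_indep : ∀ w : Fin K → Msg,
    prob p (fun ω => (fun k => W k ω)) w = ∏ k : Fin K, prob p (W k) (w k)
  W_ent : ∀ k, ent p (W k) = L
  F_indep : ∀ (f : Key) (w : Fin K → Msg),
    prob p (fun ω => (F ω, fun k => W k ω)) (f, w)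
      = prob p F f * prob p (fun ω => (fun k => W k ω)) w
  S_det : ∀ n : Fin N, ∃ g : (Fin K → Msg) → Sto, ∀ ω, S n ω = g (fun k => W k ω)
  Q_det : ∀ (k : Fin K) (n : Fin N), ∃ g : Key → Qry, ∀ ω, Q k n ω = g (F ω)
  A_det : ∀ n : Fin N, ∃ φ : Qry → Sto → Ans, ∀ (k : Fin K) (ω : Ω), A k n ω = φ (Q k n ω) (S n ω)
  correct : ∀ k : Fin K, ∃ g : (Fin N → Ans) → (Fin N → Qry) → Msg,
    ∀ ω, W k ω = g (fun n => A k n ω) (fun n => Q k n ω)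
  privacy : ∀ (n : Fin N) (k k' : Fin K) (q : Qry),
    prob p (Q k n) q = prob p (Q k' n) q

attribute [instance] PIRScheme.finΩ

/-- The set of server (or message) indices `{i : i < m}`, i.e. paper indices `1, …, m`. -/
def finLt (N m : ℕ) : Finset (Fin N) := Finset.univ.filter (fun i => i.val < m)

/-- The set of server (or message) indices `{i : m ≤ i}`, i.e. paper indices `m+1, …, N`. -/
def finGe (N m : ℕ) : Finset (Fin N) := Finset.univ.filter (fun i => m ≤ i.val)

namespace PIRScheme

variable {N K : ℕ}

/-- Informational normalized storage cost `α = (1/(N L)) ∑ₙ H(Sₙ)`. -/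
noncomputable def alpha (s : PIRScheme N K) : ℝ :=
  (1 / (N * s.L)) * ∑ n : Fin N, ent s.p (s.S n)

/-- Informational normalized download cost for desired message `k`:
`(1/(N L)) ∑ₙ H(Aₙ^[k] | Q₁^[k], …, Q_N^[k])`.  The download cost `β` of the scheme is
`betaAt` at the first message. -/
noncomputable def betaAt (s : PIRScheme N K) (k : Fin K) : ℝ :=
  (1 / (N * s.L)) *
    ∑ n : Fin N, condEnt s.p (s.A k n) (fun ω => (fun n' : Fin N => s.Q k n' ω))

/-- The joint random variable `S_B = (Sₙ : n ∈ B)`. -/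
noncomputable def jointS (s : PIRScheme N K) (B : Finset (Fin N)) : s.Ω → (B → s.Sto) :=
  fun ω i => s.S i.1 ω

/-- The joint random variable `A_B^[k] = (Aₙ^[k] : n ∈ B)`. -/
noncomputable def jointA (s : PIRScheme N K) (k : Fin K) (B : Finset (Fin N)) :
    s.Ω → (B → s.Ans) :=
  fun ω i => s.A k i.1 ω

/-- The joint random variable `W_C = (Wₖ : k ∈ C)`. -/
noncomputable def jointW (s : PIRScheme N K) (C : Finset (Fin K)) : s.Ω → (C → s.Msg) :=
  fun ω i => s.W i.1 ω

/-- A scheme is symmetric if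
`H(S_A, A_B^[k] | F, W_C) = H(S_{π(A)}, A_{π(B)}^[π'(k)] | F, W_{π'(C)})` for all
permutations `π` of the servers and `π'` of the messages. -/
def Symmetric (s : PIRScheme N K) : Prop :=
  ∀ (A B : Finset (Fin N)) (C : Finset (Fin K)) (k : Fin K)
    (π : Equiv.Perm (Fin N)) (π' : Equiv.Perm (Fin K)),
    condEnt s.p (fun ω => (s.jointS A ω, s.jointA k B ω)) (fun ω => (s.F ω, s.jointW C ω))
      = condEnt s.p (fun ω => (s.jointS (A.image ⇑π) ω, s.jointA (π' k) (B.image ⇑π) ω))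
          (fun ω => (s.F ω, s.jointW (C.image ⇑π') ω))

end PIRScheme

section Aux
variable {Ω α β : Type} [Fintype Ω]

lemma prob_nonneg (p : Ω → ℝ) (hp : ∀ ω, 0 ≤ p ω) (X : Ω → α) (a : α) : 0 ≤ prob p X a := by
  apply Finset.sum_nonneg; intro ω _; split <;> simp [hp ω]

lemma prob_eq_zero (p : Ω → ℝ) (X : Ω → α) (a : α) (ha : a ∉ Finset.univ.image X) :
    prob p X a = 0 := by
  apply Finset.sum_eq_zero; intro ω _
  have : X ω ≠ a := fun h => ha (by simp [← h])
  simp [this]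

lemma ent_eq_sum_subset (p : Ω → ℝ) (X : Ω → α) (t : Finset α) (ht : Finset.univ.image X ⊆ t) :
    ent p X = ∑ a ∈ t, Real.negMulLog (prob p X a) := by
  rw [ent]
  apply Finset.sum_subset ht
  intro a _ ha
  rw [prob_eq_zero p X a ha, Real.negMulLog_zero]

lemma sum_prob_image (p : Ω → ℝ) (hs : ∑ ω : Ω, p ω = 1) (X : Ω → α) :
    ∑ a ∈ Finset.univ.image X, prob p X a = 1 := by
  unfold prob
  rw [Finset.sum_comm]
  rw [← hs]
  apply Finset.sum_congr rfl
  intro ω _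
  rw [Finset.sum_ite_eq]
  simp

lemma ent_comp_inj (p : Ω → ℝ) (X : Ω → α) (f : α → β) (hf : Function.Injective f) :
    ent p (fun ω => f (X ω)) = ent p X := by
  unfold ent
  have himg : Finset.univ.image (fun ω => f (X ω)) = (Finset.univ.image X).image f := by
    rw [Finset.image_image]; rfl
  rw [himg, Finset.sum_image (fun a _ b _ h => hf h)]
  apply Finset.sum_congr rfl
  intro a _
  congr 1
  unfold prob
  apply Finset.sum_congr rfl
  intro ω _
  simp [hf.eq_iff]

lemma condEnt_const (p : Ω → ℝ) (c : α) (Y : Ω → β) : condEnt p (fun _ => c) Y = 0 := by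
  unfold condEnt
  have : (fun ω => ((c : α), Y ω)) = fun ω => (fun y => (c, y)) (Y ω) := rfl
  rw [this, ent_comp_inj p Y _ (fun a b h => by simpa using congrArg Prod.snd h)]
  ring

end Aux

section Main
variable {Ω α β : Type} [Fintype Ω]

/-- Jensen step: for nonnegative `r` on a fintype `α`,
`∑ a, negMulLog (r a) ≤ negMulLog (∑ a, r a) + (∑ a, r a) * log (card α)`. -/
lemma sum_negMulLog_le [Fintype α] [Nonempty α] (r : α → ℝ) (hr : ∀ a, 0 ≤ r a) :
    ∑ a : α, Real.negMulLog (r a)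
      ≤ Real.negMulLog (∑ a : α, r a) + (∑ a : α, r a) * Real.log (Fintype.card α) := by
  set m : ℝ := (Fintype.card α : ℝ) with hm
  have hmpos : (0:ℝ) < m := by
    simp only [hm]
    exact_mod_cast Fintype.card_pos (α := α)
  set q : ℝ := ∑ a : α, r a with hq
  have hqnn : 0 ≤ q := Finset.sum_nonneg fun a _ => hr a
  have hjen : ∑ a : α, m⁻¹ • Real.negMulLog (r a) ≤ Real.negMulLog (∑ a : α, m⁻¹ • r a) := by
    apply Real.concaveOn_negMulLog.le_map_sum
    · intro a _; positivity
    · rw [Finset.sum_const, card_univ, nsmul_eq_mul, ← hm]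
      exact mul_inv_cancel₀ (ne_of_gt hmpos)
    · intro a _; exact hr a
  have hsum : ∑ a : α, m⁻¹ • r a = q / m := by
    rw [← Finset.smul_sum]; simp [smul_eq_mul, div_eq_inv_mul, hq]
  rw [hsum] at hjen
  have h2 : Real.negMulLog (q / m) = m⁻¹ * (Real.negMulLog q + q * Real.log m) := by
    rcases eq_or_lt_of_le hqnn with h0 | h0
    · simp [← h0, Real.negMulLog_zero]
    · rw [Real.negMulLog, Real.negMulLog, Real.log_div (ne_of_gt h0) (ne_of_gt hmpos)]
      field_simp
      ring
  rw [h2] at hjen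
  have := mul_le_mul_of_nonneg_left hjen (le_of_lt hmpos)
  rw [Finset.mul_sum] at this
  calc ∑ a : α, Real.negMulLog (r a)
      = ∑ a : α, m * (m⁻¹ • Real.negMulLog (r a)) := by
        apply Finset.sum_congr rfl; intro a _; rw [smul_eq_mul]; field_simp
    _ ≤ m * (m⁻¹ * (Real.negMulLog q + q * Real.log m)) := this
    _ = Real.negMulLog q + q * Real.log m := by field_simp

lemma condEnt_le_log_card [Fintype α] (p : Ω → ℝ) (hp : ∀ ω, 0 ≤ p ω)
    (hs : ∑ ω : Ω, p ω = 1) (X : Ω → α) (Y : Ω → β) :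
    condEnt p X Y ≤ Real.log (Fintype.card α) := by
  have hΩ : Nonempty Ω := by
    by_contra h
    rw [not_nonempty_iff] at h
    rw [Finset.sum_eq_zero (fun ω _ => (h.false ω).elim)] at hs
    norm_num at hs
  have hα : Nonempty α := ⟨X (Classical.arbitrary Ω)⟩
  set U : Finset β := Finset.univ.image Y with hU
  set XY : Ω → α × β := fun ω => (X ω, Y ω) with hXY
  -- marginal identity
  have hmarg : ∀ b, ∑ a : α, prob p XY (a, b) = prob p Y b := by
    intro b
    unfold prob
    rw [Finset.sum_comm]
    apply Finset.sum_congr rfl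
    intro ω _
    by_cases h : Y ω = b
    · simp [hXY, Prod.ext_iff, h, Finset.sum_ite_eq]
    · simp [hXY, Prod.ext_iff, h]
  -- entropy of joint over the product set
  have hXYent : ent p XY = ∑ b ∈ U, ∑ a : α, Real.negMulLog (prob p XY (a, b)) := by
    rw [ent_eq_sum_subset p XY (Finset.univ ×ˢ U) (by
      intro c hc
      simp only [Finset.mem_image] at hc
      obtain ⟨ω, _, rfl⟩ := hc
      simp [hU, Finset.mem_product]; exact ⟨ω, rfl⟩), Finset.sum_product]
    rw [Finset.sum_comm]
  have hbound : ∀ b ∈ U, ∑ a : α, Real.negMulLog (prob p XY (a, b))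
      ≤ Real.negMulLog (prob p Y b) + prob p Y b * Real.log (Fintype.card α) := by
    intro b _
    have := sum_negMulLog_le (fun a => prob p XY (a, b))
      (fun a => prob_nonneg p hp XY (a, b))
    rwa [hmarg b] at this
  have h1 : ent p XY ≤ ent p Y + Real.log (Fintype.card α) := by
    rw [hXYent]
    calc ∑ b ∈ U, ∑ a : α, Real.negMulLog (prob p XY (a, b))
        ≤ ∑ b ∈ U, (Real.negMulLog (prob p Y b) + prob p Y b * Real.log (Fintype.card α)) :=
          Finset.sum_le_sum hbound
      _ = ent p Y + (∑ b ∈ U, prob p Y b) * Real.log (Fintype.card α) := by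
          rw [Finset.sum_add_distrib, ← Finset.sum_mul]; rfl
      _ = ent p Y + Real.log (Fintype.card α) := by
          rw [sum_prob_image p hs Y, one_mul]
  unfold condEnt
  linarith
end Main

section Scheme
variable {Ω : Type} [Fintype Ω]

lemma ent_const (p : Ω → ℝ) (hs : ∑ ω : Ω, p ω = 1) [Nonempty Ω] {γ : Type} (c : γ) :
    ent p (fun _ : Ω => c) = 0 := by
  unfold ent
  have : Finset.univ.image (fun _ : Ω => c) = {c} := by
    apply Finset.Subset.antisymm
    · intro x hx; simp only [Finset.mem_image] at hx; obtain ⟨ω, _, rfl⟩ := hx; simp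
    · intro x hx
      simp only [Finset.mem_singleton] at hx
      subst hx
      exact Finset.mem_image_of_mem _ (Finset.mem_univ (Classical.arbitrary Ω))
  rw [this, Finset.sum_singleton]
  have : prob p (fun _ : Ω => c) c = 1 := by unfold prob; simpa using hs
  rw [this, Real.negMulLog_one]

end Scheme

/-! Concrete scheme ingredients. -/

abbrev Vec (K : ℕ) := Fin K → ZMod 2

noncomputable def up (K : ℕ) : ℝ := ((2:ℝ)^K)⁻¹

noncomputable def pm (K : ℕ) : Vec K × Vec K → ℝ := fun _ => up K * up K

lemma up_pos (K : ℕ) : 0 < up K := by unfold up; positivity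

lemma pow_up (K : ℕ) : (2:ℝ)^K * up K = 1 := by
  unfold up; field_simp

lemma card_vec (K : ℕ) : Fintype.card (Vec K) = 2^K := by
  simp [Fintype.card_fun]

lemma zmod2_cases (a : ZMod 2) : a = 0 ∨ a = 1 := by revert a; decide

lemma sum_eval_fiber {K : ℕ} (k : Fin K) (b : ZMod 2) (c : ℝ) :
    ∑ w : Vec K, (if w k = b then c else 0) = (2:ℝ)^K * c / 2 := by
  have h01 : (∑ w : Vec K, if w k = 1 then c else 0)
      = (∑ w : Vec K, if w k = 0 then c else 0) := by
    apply Fintype.sum_bijective (fun w : Vec K => w + Pi.single k 1)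
    · apply Function.Involutive.bijective
      intro w
      funext j
      by_cases hj : j = k
      · subst hj
        simp [Pi.single_apply, add_assoc, show (1+1 : ZMod 2) = 0 by decide]
      · simp [Pi.single_apply, hj]
    · intro w
      have h1 : ∀ a : ZMod 2, (a + 1 = 0) = (a = 1) := by
        intro a
        apply propext
        rcases zmod2_cases a with h | h <;> subst h <;> simp <;> decide
      simp [Pi.single_apply, h1]
  have hsum : (∑ w : Vec K, if w k = 0 then c else 0)
      + (∑ w : Vec K, if w k = 1 then c else 0) = (2:ℝ)^K * c := by
    rw [← Finset.sum_add_distrib]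
    have : ∀ w : Vec K, ((if w k = 0 then c else 0) + (if w k = 1 then c else 0)) = c := by
      intro w
      rcases zmod2_cases (w k) with h | h <;>
        simp [h, show (0:ZMod 2) ≠ 1 by decide, show (1:ZMod 2) ≠ 0 by decide]
    rw [Finset.sum_congr rfl (fun w _ => this w), Finset.sum_const, card_univ, card_vec,
      nsmul_eq_mul]
    push_cast
    ring
  rcases zmod2_cases b with h | h <;> subst h <;> linarith

/-- Bridge: rewrite `prob` with a chosen decidability instance. -/
lemma prob_eq {Ω α : Type} [Fintype Ω] (p : Ω → ℝ) (X : Ω → α) (a : α)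
    (D : ∀ ω, Decidable (X ω = a)) :
    prob p X a = ∑ ω : Ω, @ite _ (X ω = a) (D ω) (p ω) 0 := by
  unfold prob
  apply Finset.sum_congr rfl
  intro ω _
  by_cases h : X ω = a <;> simp [h]

lemma prob_fst (K : ℕ) (w : Vec K) :
    prob (pm K) (fun ω : Vec K × Vec K => ω.1) w = up K := by
  rw [prob_eq _ _ _ (fun ω => inferInstance), Fintype.sum_prod_type]
  have this1 : ∀ a : Vec K, (∑ _b : Vec K, if a = w then up K * up K else 0)
      = (if a = w then (2:ℝ)^K * (up K * up K) else 0) := by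
    intro a
    split <;> simp [Finset.sum_const, card_univ, card_vec] <;> push_cast <;> ring
  refine (Finset.sum_congr rfl fun a _ => this1 a).trans ?_
  rw [Finset.sum_ite_eq' Finset.univ w]
  simp only [Finset.mem_univ, if_pos]
  rw [← mul_assoc, pow_up, one_mul]

lemma prob_snd (K : ℕ) (f : Vec K) :
    prob (pm K) (fun ω : Vec K × Vec K => ω.2) f = up K := by
  rw [prob_eq _ _ _ (fun ω => inferInstance), Fintype.sum_prod_type]
  have this1 : ∀ a : Vec K, (∑ b : Vec K, if b = f then up K * up K else 0)
      = up K * up K := by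
    intro a
    rw [Finset.sum_ite_eq' Finset.univ f]
    simp
  refine (Finset.sum_congr rfl fun a _ => this1 a).trans ?_
  rw [Finset.sum_const, card_univ, card_vec, nsmul_eq_mul]
  push_cast
  rw [← mul_assoc, pow_up, one_mul]

lemma prob_eval (K : ℕ) (k : Fin K) (b : ZMod 2) :
    prob (pm K) (fun ω : Vec K × Vec K => ω.1 k) b = 1/2 := by
  rw [prob_eq _ _ _ (fun ω => inferInstance), Fintype.sum_prod_type]
  have this1 : ∀ a : Vec K, (∑ _b : Vec K, if a k = b then up K * up K else 0)
      = (if a k = b then (2:ℝ)^K * (up K * up K) else 0) := by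
    intro a
    split <;> simp [Finset.sum_const, card_univ, card_vec] <;> push_cast <;> ring
  refine (Finset.sum_congr rfl fun a _ => this1 a).trans ?_
  rw [sum_eval_fiber k b]
  have h1 := pow_up K
  have h2 : (2:ℝ)^K ≠ 0 := by positivity
  field_simp
  nlinarith [up_pos K, pow_up K]

lemma prob_shift (K : ℕ) (v q : Vec K) :
    prob (pm K) (fun ω : Vec K × Vec K => ω.2 + v) q = up K := by
  rw [prob_eq _ _ _ (fun ω => inferInstance), Fintype.sum_prod_type]
  have this1 : ∀ a : Vec K, (∑ b : Vec K, if b + v = q then up K * up K else 0)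
      = up K * up K := by
    intro a
    have hc : ∀ b : Vec K, ((b + v = q) : Prop) ↔ (b = q - v) := by
      intro b
      constructor
      · intro h; rw [← h]; abel
      · intro h; rw [h]; abel
    have : (∑ b : Vec K, if b + v = q then up K * up K else 0)
        = ∑ b : Vec K, if b = q - v then up K * up K else 0 :=
      Finset.sum_congr rfl fun b _ => if_congr (hc b) rfl rfl
    rw [this, Finset.sum_ite_eq' Finset.univ (q - v)]
    simp
  refine (Finset.sum_congr rfl fun a _ => this1 a).trans ?_
  rw [Finset.sum_const, card_univ, card_vec, nsmul_eq_mul]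
  push_cast
  rw [← mul_assoc, pow_up, one_mul]

lemma prob_pair (K : ℕ) (f w : Vec K) :
    prob (pm K) (fun ω : Vec K × Vec K => (ω.2, ω.1)) (f, w) = up K * up K := by
  rw [prob_eq _ _ _ (fun ω => inferInstance), Fintype.sum_prod_type]
  have this1 : ∀ a : Vec K, (∑ b : Vec K, if ((b, a) : Vec K × Vec K) = (f, w)
        then up K * up K else 0)
      = (if a = w then up K * up K else 0) := by
    intro a
    by_cases h : a = w
    · subst h
      have : (∑ b : Vec K, if ((b, a) : Vec K × Vec K) = (f, a) then up K * up K else 0)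
          = ∑ b : Vec K, if b = f then up K * up K else 0 :=
        Finset.sum_congr rfl fun b _ => if_congr (by simp [Prod.ext_iff]) rfl rfl
      rw [this, Finset.sum_ite_eq' Finset.univ f]
      simp
    · rw [Finset.sum_eq_zero (fun b _ => by simp [Prod.ext_iff, h])]
      simp [h]
  refine (Finset.sum_congr rfl fun a _ => this1 a).trans ?_
  rw [Finset.sum_ite_eq' Finset.univ w]
  simp

lemma pm_sum (K : ℕ) : ∑ ω : Vec K × Vec K, pm K ω = 1 := by
  unfold pm
  rw [Finset.sum_const, card_univ, nsmul_eq_mul]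
  have : (Fintype.card (Vec K × Vec K) : ℝ) = 2^K * 2^K := by
    rw [Fintype.card_prod, card_vec]
    push_cast
    ring
  rw [this]
  nlinarith [pow_up K]

lemma pm_nonneg (K : ℕ) : ∀ ω : Vec K × Vec K, 0 ≤ pm K ω :=
  fun _ => le_of_lt (mul_pos (up_pos K) (up_pos K))

lemma ent_fst (K : ℕ) : ent (pm K) (fun ω : Vec K × Vec K => ω.1) = K * Real.log 2 := by
  rw [ent_eq_sum_subset (pm K) _ Finset.univ (Finset.subset_univ _)]
  rw [Finset.sum_congr rfl (fun w _ => by rw [prob_fst K w])]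
  rw [Finset.sum_const, card_univ, card_vec, nsmul_eq_mul]
  have hneg : Real.negMulLog (up K) = up K * (K * Real.log 2) := by
    unfold Real.negMulLog up
    rw [Real.log_inv, Real.log_pow]
    push_cast
    ring
  rw [hneg, ← mul_assoc]
  push_cast
  rw [pow_up K, one_mul]

lemma ent_msg (K : ℕ) (k : Fin K) :
    ent (pm K) (fun ω : Vec K × Vec K => ω.1 k) = Real.log 2 := by
  rw [ent_eq_sum_subset (pm K) _ Finset.univ (Finset.subset_univ _)]
  rw [Finset.sum_congr rfl (fun b _ => by rw [prob_eval K k b])]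
  rw [Finset.sum_const, card_univ]
  have : Fintype.card (ZMod 2) = 2 := by simp
  rw [this]
  have hneg : Real.negMulLog (1/2 : ℝ) = (1/2) * Real.log 2 := by
    unfold Real.negMulLog
    rw [one_div, Real.log_inv]
    ring
  rw [hneg, nsmul_eq_mul]
  push_cast
  ring

/-! The concrete scheme. -/

def Qfun (N K : ℕ) (k : Fin K) (n : Fin N) (ω : Vec K × Vec K) : Vec K :=
  if n.val = 0 then ω.2 else if n.val = 1 then ω.2 + Pi.single k 1 else 0

def Sfun (N K : ℕ) (n : Fin N) (ω : Vec K × Vec K) : Vec K :=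
  if n.val < 2 then ω.1 else 0

noncomputable def Afun (N K : ℕ) (k : Fin K) (n : Fin N) (ω : Vec K × Vec K) : ZMod 2 :=
  ∑ j, Qfun N K k n ω j * Sfun N K n ω j

lemma Afun_ge2 (N K : ℕ) (k : Fin K) (n : Fin N) (h : ¬ n.val < 2) :
    Afun N K k n = fun _ => 0 := by
  funext ω
  unfold Afun Sfun
  rw [if_neg h]
  simp

noncomputable def scheme (N K : ℕ) (hN : 2 ≤ N) (hK : 1 ≤ K) : PIRScheme N K where
  Ω := Vec K × Vec K
  Msg := ZMod 2
  Sto := Vec K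
  Qry := Vec K
  Ans := ZMod 2
  Key := Vec K
  p := pm K
  p_nonneg := pm_nonneg K
  p_sum := pm_sum K
  L := Real.log 2
  L_pos := Real.log_pos (by norm_num)
  W := fun k ω => ω.1 k
  S := Sfun N K
  F := fun ω => ω.2
  Q := Qfun N K
  A := Afun N K
  W_indep := by
    intro w
    have hL : prob (pm K) (fun ω : Vec K × Vec K => (fun k => ω.1 k)) w = up K := prob_fst K w
    rw [hL, Finset.prod_congr rfl (fun k _ => prob_eval K k (w k)), Finset.prod_const,
      card_univ, Fintype.card_fin]
    unfold up
    rw [one_div, inv_pow]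
  W_ent := fun k => ent_msg K k
  F_indep := by
    intro f w
    have hL : prob (pm K) (fun ω : Vec K × Vec K => (ω.2, fun k => ω.1 k)) (f, w)
        = up K * up K := prob_pair K f w
    have h2 : prob (pm K) (fun ω : Vec K × Vec K => (fun k => ω.1 k)) w = up K := prob_fst K w
    have h3 : prob (pm K) (fun ω : Vec K × Vec K => ω.2) f = up K := prob_snd K f
    rw [hL, h2, h3]
  S_det := fun n => ⟨fun w => if n.val < 2 then w else 0, fun ω => rfl⟩
  Q_det := fun k n =>
    ⟨fun x => if n.val = 0 then x else if n.val = 1 then x + Pi.single k 1 else 0,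
      fun ω => by simp only [Qfun]⟩
  A_det := fun n => ⟨fun q s => ∑ j, q j * s j, fun k ω => rfl⟩
  correct := by
    intro k
    refine ⟨fun ans _ => ans ⟨0, by omega⟩ + ans ⟨1, by omega⟩, fun ω => ?_⟩
    show ω.1 k = Afun N K k ⟨0, by omega⟩ ω + Afun N K k ⟨1, by omega⟩ ω
    unfold Afun Qfun Sfun
    norm_num
    rw [← Finset.sum_add_distrib]
    have key : ∀ j : Fin K,
        ω.2 j * ω.1 j + (ω.2 j + (Pi.single k (1 : ZMod 2) : Vec K) j) * ω.1 j
          = (Pi.single k (1 : ZMod 2) : Vec K) j * ω.1 j := by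
      intro j
      have h : ∀ a b c : ZMod 2, a * c + (a + b) * c = b * c := by decide
      exact h (ω.2 j) _ (ω.1 j)
    rw [Finset.sum_congr rfl (fun j _ => key j)]
    have : ∀ j, (Pi.single k (1 : ZMod 2) : Vec K) j * ω.1 j = if j = k then ω.1 j else 0 := by
      intro j
      rw [Pi.single_apply]
      split <;> simp
    rw [Finset.sum_congr rfl (fun j _ => this j), Finset.sum_ite_eq' Finset.univ k]
    simp
  privacy := by
    intro n k k' q
    by_cases h0 : n.val = 0
    · have : Qfun N K k n = Qfun N K k' n := by
        funext ω; unfold Qfun; rw [if_pos h0, if_pos h0]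
      rw [this]
    by_cases h1 : n.val = 1
    · have e1 : Qfun N K k n = fun ω => ω.2 + Pi.single k 1 := by
        funext ω; unfold Qfun; rw [if_neg h0, if_pos h1]
      have e2 : Qfun N K k' n = fun ω => ω.2 + Pi.single k' 1 := by
        funext ω; unfold Qfun; rw [if_neg h0, if_pos h1]
      rw [e1, e2, prob_shift K (Pi.single k 1) q, prob_shift K (Pi.single k' 1) q]
    · have : Qfun N K k n = Qfun N K k' n := by
        funext ω; unfold Qfun; rw [if_neg h0, if_neg h1, if_neg h0, if_neg h1]
      rw [this]

lemma card_lt2 (N : ℕ) (hN : 2 ≤ N) :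
    (Finset.univ.filter (fun n : Fin N => n.val < 2)).card = 2 := by
  have : Finset.univ.filter (fun n : Fin N => n.val < 2)
      = {(⟨0, by omega⟩ : Fin N), ⟨1, by omega⟩} := by
    ext n
    simp only [Finset.mem_filter, Finset.mem_univ, true_and, Finset.mem_insert,
      Finset.mem_singleton, Fin.ext_iff]
    omega
  rw [this, Finset.card_insert_of_notMem (by simp [Fin.ext_iff]), Finset.card_singleton]


/-- Proposition 1(i): the point `(2α₀, 2β₀) = (2K/N, 2·∑_{i=1}^K N^{-i})` is achievable. -/
theorem stmt0 (N K : ℕ) (hN : 2 ≤ N) (hK : 1 ≤ K) :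
    ∃ s : PIRScheme N K,
      s.alpha ≤ 2 * K / N ∧
      s.betaAt ⟨0, by omega⟩ ≤ 2 * ∑ i ∈ Finset.Icc 1 K, ((N : ℝ))⁻¹ ^ i := by
  refine ⟨scheme N K hN hK, ?_, ?_⟩
  all_goals
    have hNpos : (0:ℝ) < N := by positivity
    have hL : (0:ℝ) < Real.log 2 := Real.log_pos (by norm_num)
  · -- storage
    have halpha : (scheme N K hN hK).alpha
        = (1 / (N * Real.log 2)) * ∑ n : Fin N, ent (pm K) (Sfun N K n) := rfl
    have hent : ∀ n : Fin N,
        ent (pm K) (Sfun N K n) = if n.val < 2 then (K : ℝ) * Real.log 2 else 0 := by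
      intro n
      by_cases h : n.val < 2
      · rw [if_pos h]
        have : Sfun N K n = fun ω : Vec K × Vec K => ω.1 := by
          funext ω; unfold Sfun; rw [if_pos h]
        rw [this, ent_fst]
      · rw [if_neg h]
        have : Sfun N K n = fun _ : Vec K × Vec K => (0 : Vec K) := by
          funext ω; unfold Sfun; rw [if_neg h]
        rw [this, ent_const (pm K) (pm_sum K) 0]
    have hsum : ∑ n : Fin N, ent (pm K) (Sfun N K n) = 2 * ((K : ℝ) * Real.log 2) := by
      rw [Finset.sum_congr rfl (fun n _ => hent n), Finset.sum_ite, Finset.sum_const,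
        Finset.sum_const, card_lt2 N hN]
      simp
      try ring
    rw [halpha, hsum]
    apply le_of_eq
    field_simp
  · -- download
    set k0 : Fin K := ⟨0, by omega⟩ with hk0
    have hbeta : (scheme N K hN hK).betaAt ⟨0, by omega⟩
        = (1 / (N * Real.log 2)) * ∑ n : Fin N,
            condEnt (pm K) (Afun N K k0 n)
              (fun ω => (fun n' : Fin N => Qfun N K k0 n' ω)) := rfl
    have hterm : ∀ n : Fin N,
        condEnt (pm K) (Afun N K k0 n) (fun ω => (fun n' : Fin N => Qfun N K k0 n' ω))
          ≤ if n.val < 2 then Real.log 2 else 0 := by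
      intro n
      by_cases h : n.val < 2
      · rw [if_pos h]
        have hb := condEnt_le_log_card (pm K) (pm_nonneg K) (pm_sum K)
          (Afun N K k0 n) (fun ω => (fun n' : Fin N => Qfun N K k0 n' ω))
        have hc : (Fintype.card (ZMod 2) : ℝ) = 2 := by simp
        rwa [hc] at hb
      · rw [if_neg h, Afun_ge2 N K k0 n h, condEnt_const]
    have hsum : ∑ n : Fin N,
        condEnt (pm K) (Afun N K k0 n) (fun ω => (fun n' : Fin N => Qfun N K k0 n' ω))
          ≤ 2 * Real.log 2 := by
      calc ∑ n : Fin N, condEnt (pm K) (Afun N K k0 n)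
              (fun ω => (fun n' : Fin N => Qfun N K k0 n' ω))
          ≤ ∑ n : Fin N, (if n.val < 2 then Real.log 2 else 0) :=
            Finset.sum_le_sum (fun n _ => hterm n)
        _ = 2 * Real.log 2 := by
            rw [Finset.sum_ite, Finset.sum_const, Finset.sum_const, card_lt2 N hN]
            simp
    have h2N : (scheme N K hN hK).betaAt ⟨0, by omega⟩ ≤ 2 / N := by
      rw [hbeta]
      have hpos : (0:ℝ) ≤ 1 / (N * Real.log 2) := by positivity
      calc (1 / (N * Real.log 2)) * ∑ n : Fin N,
              condEnt (pm K) (Afun N K k0 n) (fun ω => (fun n' : Fin N => Qfun N K k0 n' ω))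
          ≤ (1 / (N * Real.log 2)) * (2 * Real.log 2) := by
            exact mul_le_mul_of_nonneg_left hsum hpos
        _ = 2 / N := by field_simp
    refine h2N.trans ?_
    have hmem : 1 ∈ Finset.Icc 1 K := by simp [hK]
    have hsingle : ((N : ℝ))⁻¹ ^ 1 ≤ ∑ i ∈ Finset.Icc 1 K, ((N : ℝ))⁻¹ ^ i :=
      Finset.single_le_sum (fun i _ => by positivity) hmem
    rw [pow_one] at hsingle
    rw [div_eq_mul_inv]
    linarith
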